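/- Let f ∈ BV(ℤ) and let M be the discrete centered Hardy–Littlewood maximal operator. If n ∈ ℤ is not a global minimum of Mf (i.e., there exists m with Mf(m) < Mf(n)), then the supremum defining Mf(n) is attained: there exists a radius r_n ∈ ℤ, r_n ≥ 0, such that Mf(n) = (1/(2r_n+1)) Σ_{k=−r_n}^{r_n} |f(n+k)|. -/

import Mathlib

open MeasureTheory Filter Topology Set

/-- The centered discrete average of `|f|` at `n` with radius `r`. -/
noncomputable def Avg (f : ℤ → ℝ) (n : ℤ) (r : ℕ) : ℝ :=
  (2 * (r : ℝ) + 1)⁻¹ * ∑ k ∈ Finset.Icc (-(r : ℤ)) (r : ℤ), |f (n + k)|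

/-- The discrete centered Hardy–Littlewood maximal operator. -/
noncomputable def MD (f : ℤ → ℝ) (n : ℤ) : ℝ :=
  ⨆ r : ℕ, Avg f n r

/-- The total variation of a sequence `f : ℤ → ℝ`. -/
noncomputable def DVar (f : ℤ → ℝ) : ℝ :=
  ∑' n : ℤ, |f (n + 1) - f n|

/-- `f : ℤ → ℝ` has bounded variation (and a limit at `-∞`). -/
def DBV (f : ℤ → ℝ) : Prop :=
  Summable (fun n : ℤ => |f (n + 1) - f n|) ∧ ∃ L : ℝ, Tendsto f atBot (𝓝 L)

-- telescoping bound
lemma tele_bound (f : ℤ → ℝ) (m k : ℤ) (hmk : m ≤ k) :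
    |f k - f m| ≤ ∑ j ∈ Finset.Ico m k, |f (j + 1) - f j| := by
  refine Int.le_induction (motive := fun k _ => |f k - f m| ≤ ∑ j ∈ Finset.Ico m k, |f (j + 1) - f j|) ?_ ?_ k hmk
  · simp
  · intro k hk ih
    have hins : Finset.Ico m (k + 1) = insert k (Finset.Ico m k) := by
      ext j; simp only [Finset.mem_Ico, Finset.mem_insert]; omega
    rw [hins, Finset.sum_insert (by simp)]
    calc |f (k + 1) - f m| ≤ |f (k + 1) - f k| + |f k - f m| := by
          have := abs_add_le (f (k+1) - f k) (f k - f m); simpa [sub_add_sub_cancel] using this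
      _ ≤ |f (k + 1) - f k| + ∑ j ∈ Finset.Ico m k, |f (j + 1) - f j| := by linarith

lemma bdd_of_dbv (f : ℤ → ℝ) (hbv : DBV f) : ∃ C : ℝ, 0 ≤ C ∧ ∀ k, |f k| ≤ C := by
  obtain ⟨hs, L, hL⟩ := hbv
  refine ⟨|L| + DVar f, add_nonneg (abs_nonneg _) (tsum_nonneg fun _ => abs_nonneg _), fun k => ?_⟩
  have h1 : ∀ m : ℤ, m ≤ k → |f k - f m| ≤ DVar f := by
    intro m hm
    refine (tele_bound f m k hm).trans ?_
    exact Summable.sum_le_tsum _ (fun j _ => abs_nonneg _) hs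
  have h2 : |f k - L| ≤ DVar f := by
    have ht : Tendsto (fun m : ℤ => |f k - f m|) atBot (𝓝 |f k - L|) :=
      ((tendsto_const_nhds.sub hL).abs)
    exact le_of_tendsto ht ((eventually_le_atBot k).mono h1)
  calc |f k| ≤ |f k - L| + |L| := by
        have := abs_add_le (f k - L) L; simpa using this
    _ ≤ |L| + DVar f := by linarith

lemma avg_le_C (f : ℤ → ℝ) (C : ℝ) (hC : ∀ k, |f k| ≤ C) (n : ℤ) (r : ℕ) :
    Avg f n r ≤ C := by
  have hpos : (0:ℝ) < 2 * (r:ℝ) + 1 := by positivity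
  have hsum : ∑ k ∈ Finset.Icc (-(r:ℤ)) (r:ℤ), |f (n + k)| ≤ (2 * (r:ℝ) + 1) * C := by
    calc ∑ k ∈ Finset.Icc (-(r:ℤ)) (r:ℤ), |f (n + k)|
        ≤ ∑ _k ∈ Finset.Icc (-(r:ℤ)) (r:ℤ), C := Finset.sum_le_sum (fun k _ => hC _)
      _ = ((Finset.Icc (-(r:ℤ)) (r:ℤ)).card : ℝ) * C := by rw [Finset.sum_const, nsmul_eq_mul]
      _ = (2 * (r:ℝ) + 1) * C := by
          rw [Int.card_Icc]
          have : ((r:ℤ) + 1 - -(r:ℤ)).toNat = 2 * r + 1 := by omega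
          rw [this]; push_cast; ring
  rw [Avg, inv_mul_le_iff₀ hpos]
  linarith [hsum]

lemma avg_shift (f : ℤ → ℝ) (n : ℤ) (r : ℕ) :
    ∑ k ∈ Finset.Icc (-(r:ℤ)) (r:ℤ), |f (n + k)| = ∑ j ∈ Finset.Icc (n - r) (n + r), |f j| := by
  refine Finset.sum_nbij' (fun k => n + k) (fun j => j - n) ?_ ?_ ?_ ?_ ?_ <;>
    simp +contextual [Finset.mem_Icc] <;> omega

lemma key_ineq (f : ℤ → ℝ) (C : ℝ) (hC0 : 0 ≤ C) (hC : ∀ k, |f k| ≤ C)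
    (n m : ℤ) (r : ℕ) :
    Avg f n r ≤ Avg f m r + ((n - m).natAbs : ℝ) * C * (2 * (r:ℝ) + 1)⁻¹ := by
  have hpos : (0:ℝ) < 2 * (r:ℝ) + 1 := by positivity
  set A := Finset.Icc (n - r) (n + r)
  set B := Finset.Icc (m - r) (m + r)
  have hsub : A \ B ⊆ Finset.Icc (n - r) (m - r - 1) ∪ Finset.Icc (m + r + 1) (n + r) := by
    intro j hj
    simp only [Finset.mem_sdiff, Finset.mem_Icc, A, B] at hj
    simp only [Finset.mem_union, Finset.mem_Icc]
    omega
  have hcard : ((A \ B).card : ℝ) ≤ ((n - m).natAbs : ℝ) := by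
    have h1 := Finset.card_le_card hsub
    have h2 := Finset.card_union_le (Finset.Icc (n - r) (m - r - 1)) (Finset.Icc (m + r + 1) (n + r))
    rw [Int.card_Icc, Int.card_Icc] at h2
    have : (A \ B).card ≤ (n - m).natAbs := by omega
    exact_mod_cast this
  have hAB : ∑ j ∈ A, |f j| ≤ ∑ j ∈ B, |f j| + ((n - m).natAbs : ℝ) * C := by
    have hsplit : ∑ j ∈ A ∩ B, |f j| + ∑ j ∈ A \ B, |f j| = ∑ j ∈ A, |f j| :=
      Finset.sum_inter_add_sum_sdiff A B _
    have h1 : ∑ j ∈ A ∩ B, |f j| ≤ ∑ j ∈ B, |f j| :=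
      Finset.sum_le_sum_of_subset_of_nonneg Finset.inter_subset_right
        (fun i _ _ => abs_nonneg _)
    have h2 : ∑ j ∈ A \ B, |f j| ≤ ((A \ B).card : ℝ) * C := by
      calc ∑ j ∈ A \ B, |f j| ≤ ∑ _j ∈ A \ B, C := Finset.sum_le_sum (fun k _ => hC _)
        _ = _ := by rw [Finset.sum_const, nsmul_eq_mul]
    nlinarith [mul_le_mul_of_nonneg_right hcard hC0]
  rw [Avg, Avg, avg_shift, avg_shift]
  calc (2 * (r:ℝ) + 1)⁻¹ * ∑ j ∈ A, |f j|
      ≤ (2 * (r:ℝ) + 1)⁻¹ * (∑ j ∈ B, |f j| + ((n - m).natAbs : ℝ) * C) := by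
        exact mul_le_mul_of_nonneg_left hAB (by positivity)
    _ = _ := by ring

theorem statement10
    (f : ℤ → ℝ) (hbv : DBV f) (n : ℤ)
    (h : ∃ m : ℤ, MD f m < MD f n) :
    ∃ r : ℕ, MD f n = Avg f n r := by
  obtain ⟨m, hm⟩ := h
  obtain ⟨C, hC0, hC⟩ := bdd_of_dbv f hbv
  have hbddn : BddAbove (Set.range (fun r : ℕ => Avg f n r)) :=
    ⟨C, by rintro x ⟨r, rfl⟩; exact avg_le_C f C hC n r⟩
  have hbddm : BddAbove (Set.range (fun r : ℕ => Avg f m r)) :=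
    ⟨C, by rintro x ⟨r, rfl⟩; exact avg_le_C f C hC m r⟩
  set ε := MD f n - MD f m with hε
  have hε0 : 0 < ε := by simp [hε]; linarith
  set D := ((n - m).natAbs : ℝ) * C with hD
  have hD0 : 0 ≤ D := by positivity
  obtain ⟨R, hR⟩ := exists_nat_ge (D / (ε / 2))
  have htail : ∀ r : ℕ, R ≤ r → Avg f n r ≤ MD f n - ε / 2 := by
    intro r hr
    have h1 : Avg f n r ≤ Avg f m r + D * (2 * (r:ℝ) + 1)⁻¹ := key_ineq f C hC0 hC n m r
    have h2 : Avg f m r ≤ MD f m := le_ciSup hbddm r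
    have h3 : D ≤ ε / 2 * (2 * (r:ℝ) + 1) := by
      have : D / (ε / 2) ≤ (r : ℝ) := le_trans hR (by exact_mod_cast hr)
      rw [div_le_iff₀ (by linarith)] at this
      nlinarith
    have hpos : (0:ℝ) < 2 * (r:ℝ) + 1 := by positivity
    have h4 : D * (2 * (r:ℝ) + 1)⁻¹ ≤ ε / 2 := by
      rw [← div_eq_mul_inv, div_le_iff₀ hpos]; linarith
    have : Avg f n r ≤ MD f m + ε / 2 := by linarith
    have : MD f m + ε / 2 = MD f n - ε / 2 := by rw [hε]; ring
    linarith
  obtain ⟨r₀, hr₀mem, hr₀⟩ := Finset.exists_max_image (Finset.range (R + 1))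
    (fun r => Avg f n r) ⟨0, by simp⟩
  refine ⟨r₀, le_antisymm ?_ (le_ciSup hbddn r₀)⟩
  have hub : ∀ r : ℕ, Avg f n r ≤ max (Avg f n r₀) (MD f n - ε / 2) := by
    intro r
    rcases le_or_gt r R with hrR | hrR
    · exact le_max_of_le_left (hr₀ r (Finset.mem_range.mpr (by omega)))
    · exact le_max_of_le_right (htail r (by omega))
  have hS : MD f n ≤ max (Avg f n r₀) (MD f n - ε / 2) := ciSup_le hub
  rcases max_cases (Avg f n r₀) (MD f n - ε / 2) with ⟨heq, _⟩ | ⟨heq, _⟩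
  · rwa [heq] at hS
  · rw [heq] at hS; linarith
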